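/- The combinatory-logic TRS with the two rules @(@(@(S,x),y),z) → @(@(x,z),@(y,z)) (S x y z → x z (y z)) and @(@(K,x),y) → x (K x y → x) is terminating on the set T of flat S,K-terms, i.e., on all left-associated applications c₁c₂⋯cₙ = @(…@(@(c₁,c₂),c₃)…,cₙ) with n ≥ 1 and each cᵢ ∈ {S, K}. -/

import Mathlib

namespace CLSK

/-- Ground terms of combinatory logic over a set `C` of constants. -/
inductive CL (C : Type) : Type
  | const : C → CL C
  | app : CL C → CL C → CL C

/-- The two constants `S` and `K`. -/
inductive SK : Type
  | S : SK
  | K : SK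

/-- One-step rewriting with the rules `S x y z → x z (y z)` and
`K x y → x`. -/
inductive SKRw : CL SK → CL SK → Prop
  | sroot (x y z : CL SK) :
      SKRw (.app (.app (.app (.const SK.S) x) y) z)
           (.app (.app x z) (.app y z))
  | kroot (x y : CL SK) : SKRw (.app (.app (.const SK.K) x) y) x
  | appl {s t : CL SK} (u : CL SK) : SKRw s t → SKRw (.app s u) (.app t u)
  | appr (u : CL SK) {s t : CL SK} : SKRw s t → SKRw (.app u s) (.app u t)

/-- Left-associated application of a list of constants to a term:
`leftAssoc t [c₁,…,cₖ] = ((t c₁) c₂ ⋯) cₖ`. -/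
def leftAssoc : CL SK → List SK → CL SK
  | t, [] => t
  | t, c :: cs => leftAssoc (.app t (.const c)) cs

/- Auxiliary development -/
inductive Sp : Type
  | leaf : SK → Sp
  | app2 : SK → SK → Sp → Sp
  | ext : Sp → SK → Sp

def toCL : Sp → CL SK
  | .leaf c => .const c
  | .app2 h c u => .app (.app (.const h) (.const c)) (toCL u)
  | .ext p d => .app (toCL p) (.const d)

def sz : Sp → ℕ
  | .leaf _ => 1
  | .app2 _ _ u => 2 + sz u
  | .ext p _ => sz p + 1

def tok : Sp → ℕ
  | .leaf _ => 0
  | .app2 _ _ u => 2 + tok u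
  | .ext p _ => tok p + 1

def phi : Sp → ℕ
  | .leaf _ => 0
  | .app2 _ _ u => phi u + tok u
  | .ext p _ => phi p

lemma sz_pos (p : Sp) : 1 ≤ sz p := by
  induction p <;> simp [sz] <;> omega

lemma tok_le_sz (p : Sp) : tok p ≤ sz p := by
  induction p <;> simp [tok, sz] <;> omega

lemma phi_le_sq (p : Sp) : phi p ≤ sz p * sz p := by
  induction p with
  | leaf c => simp [phi]
  | app2 h c u ih =>
      have := tok_le_sz u
      simp only [phi, sz]; nlinarith
  | ext p d ih => simp only [phi, sz]; nlinarith

lemma rw_const {c : SK} {t : CL SK} (h : SKRw (.const c) t) : False := by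
  cases h

lemma rw_inv {a b t : CL SK} (h : SKRw (.app a b) t) :
    (∃ x, a = .app (.const SK.K) x ∧ t = x) ∨
    (∃ x y, a = .app (.app (.const SK.S) x) y ∧ t = .app (.app x b) (.app y b)) ∨
    (∃ a', SKRw a a' ∧ t = .app a' b) ∨
    (∃ b', SKRw b b' ∧ t = .app a b') := by
  cases h with
  | sroot x y z => exact Or.inr (Or.inl ⟨x, y, rfl, rfl⟩)
  | kroot x y => exact Or.inl ⟨_, rfl, rfl⟩
  | appl u h => exact Or.inr (Or.inr (Or.inl ⟨_, h, rfl⟩))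
  | appr u h => exact Or.inr (Or.inr (Or.inr ⟨_, h, rfl⟩))

lemma const_inv {p : Sp} {c : SK} (h : toCL p = .const c) : p = .leaf c := by
  cases p <;> simp_all [toCL]

def Decr (p p' : Sp) : Prop :=
  (sz p' = sz p ∧ phi p' = phi p + 1) ∨ sz p' + 2 ≤ sz p

lemma sim : ∀ (p : Sp) (t' : CL SK), SKRw (toCL p) t' →
    ∃ p', t' = toCL p' ∧
      ((sz p' = sz p ∧ tok p' = tok p ∧ phi p' = phi p + 1) ∨ sz p' + 2 ≤ sz p) := by
  intro p
  induction p with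
  | leaf c => intro t' h; exact absurd h rw_const
  | app2 h c u ih =>
      intro t' hst
      rcases rw_inv hst with ⟨x, hx, ht⟩ | ⟨x, y, hxy, ht⟩ | ⟨a', ha, ht⟩ | ⟨b', hb, ht⟩
      · -- kroot: h = K, x = const c
        injection hx with h1 h2
        injection h1 with h3
        subst h2; subst ht
        refine ⟨.leaf c, rfl, Or.inr ?_⟩
        have := sz_pos u; simp [sz]; omega
      · exfalso; injection hxy with h1 _; exact nomatch h1
      · exfalso
        rcases rw_inv ha with ⟨x, hx, _⟩ | ⟨x, y, hxy, _⟩ | ⟨a'', ha', _⟩ | ⟨b'', hb', _⟩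
        · exact nomatch hx
        · exact nomatch hxy
        · exact rw_const ha'
        · exact rw_const hb'
      · rcases ih _ hb with ⟨u', hu', hd⟩
        subst hu' ht
        refine ⟨.app2 h c u', rfl, ?_⟩
        rcases hd with ⟨h1, h2, h3⟩ | h1
        · exact Or.inl ⟨by simp [sz, h1], by simp [tok, h2], by simp [phi, h2, h3]; omega⟩
        · right; simp [sz]; omega
  | ext q d ih =>
      intro t' hst
      rcases rw_inv hst with ⟨x, hx, ht⟩ | ⟨x, y, hxy, ht⟩ | ⟨a', ha, ht⟩ | ⟨b', hb, ht⟩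
      · -- toCL q = app (const K) x
        cases q with
        | leaf c => exact absurd hx (by simp [toCL])
        | app2 h c u =>
            exfalso; simp only [toCL] at hx
            injection hx with h1 _; exact nomatch h1
        | ext q2 e =>
            simp only [toCL] at hx
            injection hx with h1 h2
            have hq2 := const_inv h1
            subst hq2 h2 ht
            refine ⟨.leaf e, rfl, Or.inr ?_⟩
            simp [sz]
      · -- sroot
        cases q with
        | leaf c => exact absurd hxy (by simp [toCL])
        | app2 h c u =>
            simp only [toCL] at hxy
            injection hxy with h1 h2
            injection h1 with h3 h4
            injection h3 with h5
            subst h5 h4 h2 ht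
            refine ⟨.app2 c d (.ext u d), rfl, Or.inl ?_⟩
            refine ⟨by simp [sz]; omega, by simp [tok]; omega, by simp [phi, tok]; omega⟩
        | ext q2 e =>
            simp only [toCL] at hxy
            injection hxy with h1 h2
            cases q2 with
            | leaf c => exact absurd h1 (by simp [toCL])
            | app2 h' c' u' =>
                exfalso; simp only [toCL] at h1
                injection h1 with h3 _; exact nomatch h3
            | ext q3 f =>
                simp only [toCL] at h1
                injection h1 with h3 h4
                have hq3 := const_inv h3
                subst hq3 h4 h2 ht
                refine ⟨.app2 f d (.ext (.leaf e) d), rfl, Or.inl ?_⟩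
                refine ⟨by simp [sz], by simp [tok], by simp [phi, tok]⟩
      · rcases ih _ ha with ⟨q', hq', hd⟩
        subst hq' ht
        refine ⟨.ext q' d, rfl, ?_⟩
        rcases hd with ⟨h1, h2, h3⟩ | h1
        · exact Or.inl ⟨by simp [sz, h1], by simp [tok, h2], by simp [phi, h3]⟩
        · right; simp [sz]; omega
      · exact absurd hb rw_const

def mu (p : Sp) : ℕ := sz p * sz p * sz p + (sz p * sz p - phi p)

lemma mu_lt {p p' : Sp} (t' : CL SK) (hst : SKRw (toCL p) t') (ht : t' = toCL p')
    (hd : (sz p' = sz p ∧ tok p' = tok p ∧ phi p' = phi p + 1) ∨ sz p' + 2 ≤ sz p) :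
    mu p' < mu p := by
  have h1 := phi_le_sq p'
  have h2 := phi_le_sq p
  have h3 := sz_pos p'
  have h4 := sz_pos p
  rcases hd with ⟨hs, -, hp⟩ | hs
  · have hb : phi p + 1 ≤ sz p * sz p := by rw [hp, hs] at h1; exact h1
    simp only [mu, hs, hp]
    have hm : sz p * sz p * sz p = sz p * sz p * sz p := rfl
    omega
  · have hA : mu p' ≤ sz p' * sz p' * sz p' + sz p' * sz p' := by
      simp only [mu]; omega
    have hcube : (sz p' + 2) * (sz p' + 2) * (sz p' + 2) ≤ sz p * sz p * sz p :=
      Nat.mul_le_mul (Nat.mul_le_mul hs hs) hs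
    have hlt : sz p' * sz p' * sz p' + sz p' * sz p' <
        (sz p' + 2) * (sz p' + 2) * (sz p' + 2) := by nlinarith
    have hB : sz p * sz p * sz p ≤ mu p := by simp [mu]
    omega

lemma sn_aux : ∀ (n : ℕ) (p : Sp), mu p ≤ n →
    ¬ ∃ f : ℕ → CL SK, f 0 = toCL p ∧ ∀ k : ℕ, SKRw (f k) (f (k + 1)) := by
  intro n
  induction n with
  | zero =>
      intro p hp ⟨f, hf0, hf⟩
      have h4 := sz_pos p
      have h5 : 1 * 1 * 1 ≤ sz p * sz p * sz p :=
        Nat.mul_le_mul (Nat.mul_le_mul h4 h4) h4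
      simp only [mu] at hp
      omega
  | succ n ihn =>
      rintro p hp ⟨f, hf0, hf⟩
      have h1 := hf 0
      rw [hf0] at h1
      rcases sim p _ h1 with ⟨p', hp', hd⟩
      have := mu_lt _ h1 hp' hd
      exact ihn p' (by omega) ⟨fun k => f (k + 1), hp', fun k => hf (k + 1)⟩

lemma repr_flat : ∀ (cs : List SK) (p : Sp), ∃ p', leftAssoc (toCL p) cs = toCL p' := by
  intro cs
  induction cs with
  | nil => exact fun p => ⟨p, rfl⟩
  | cons d cs ih =>
      intro p
      have : leftAssoc (toCL p) (d :: cs) = leftAssoc (toCL (.ext p d)) cs := rfl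
      rw [this]; exact ih _

/-- Combinatory logic with `S` and `K` is terminating on
the set of flat S,K-terms `c₁c₂⋯cₙ` (`n ≥ 1`, each `cᵢ ∈ {S,K}`). -/
theorem SK_terminating_on_flat_terms :
    ∀ (c : SK) (cs : List SK),
      ¬ ∃ f : ℕ → CL SK, f 0 = leftAssoc (.const c) cs ∧
        ∀ k : ℕ, SKRw (f k) (f (k + 1)) := by
  intro c cs
  rcases repr_flat cs (.leaf c) with ⟨p, hp⟩
  have : (CL.const c : CL SK) = toCL (.leaf c) := rfl
  rw [this] at *
  rw [hp]
  exact sn_aux (mu p) p le_rfl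


end CLSK
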